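/- Let q ≥ 2 be a natural number, let m ≥ 1 be an odd natural number, and let j ≥ 1 be a natural number. Set d = gcd(m, j). Then gcd(q^m + 1, q^(2j) − 1) = q^d + 1. -/

import Mathlib

/-- If `g` divides both `q^a - 1` and `q^b - 1` then it divides `q^(gcd a b) - 1`. -/
lemma aux_dvd_pow_gcd_sub_one (q a b g : ℕ) (hq : 1 ≤ q)
    (ha : g ∣ q ^ a - 1) (hb : g ∣ q ^ b - 1) : g ∣ q ^ Nat.gcd a b - 1 := by
  have key : ∀ n : ℕ, g ∣ q ^ n - 1 → ((q : ZMod g) ^ n = 1) := by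
    intro n hn
    have h1 : 1 ≤ q ^ n := Nat.one_le_pow _ _ hq
    have h2 : ((q ^ n - 1 : ℕ) : ZMod g) = 0 := (ZMod.natCast_eq_zero_iff _ _).mpr hn
    rw [Nat.cast_sub h1] at h2
    push_cast at h2
    linear_combination h2
  have h1 : (q : ZMod g) ^ Nat.gcd a b = 1 := pow_gcd_eq_one.mpr ⟨key a ha, key b hb⟩
  have h2 : ((q ^ Nat.gcd a b - 1 : ℕ) : ZMod g) = 0 := by
    rw [Nat.cast_sub (Nat.one_le_pow _ _ hq)]
    push_cast
    rw [h1]; ring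
  exact (ZMod.natCast_eq_zero_iff _ _).mp h2

/-- The cofactor `(x^k + 1)/(x + 1)` is odd for odd `x` and odd `k`. -/
lemma aux_cofactor_odd (x : ℤ) (k : ℕ) (hx : Odd x) (hk : Odd k) :
    ∃ c : ℤ, (x + 1) * c = x ^ k + 1 ∧ ¬ (2 ∣ c) := by
  refine ⟨∑ i ∈ Finset.range k, x ^ i * (-1 : ℤ) ^ (k - 1 - i), ?_, ?_⟩
  · have h := geom_sum₂_mul x (-1 : ℤ) k
    rw [hk.neg_one_pow] at h
    simp only [sub_neg_eq_add] at h
    rw [mul_comm]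
    exact h
  · intro h2
    have h0 : ((∑ i ∈ Finset.range k, x ^ i * (-1 : ℤ) ^ (k - 1 - i) : ℤ) : ZMod 2) = 0 :=
      (ZMod.intCast_zmod_eq_zero_iff_dvd _ 2).mpr h2
    push_cast at h0
    have hx2 : (x : ZMod 2) = 1 := by
      rcases hx with ⟨t, ht⟩; subst ht; push_cast
      simp [show (2 : ZMod 2) = 0 from rfl]
    rw [show ((-1 : ZMod 2)) = 1 from by decide] at h0
    simp only [hx2, one_pow, one_mul, Finset.sum_const, Finset.card_range, nsmul_eq_mul,
      mul_one] at h0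
    have : (k : ZMod 2) = 1 := by
      rcases hk with ⟨t, ht⟩; subst ht; push_cast
      simp [show (2 : ZMod 2) = 0 from rfl]
    rw [this] at h0
    exact one_ne_zero h0

lemma aux_mul_sub (A : ℕ) (hA : 1 ≤ A) : (A + 1) * (A - 1) = A * A - 1 := by
  have h : 1 ≤ A * A := Nat.one_le_iff_ne_zero.mpr (by positivity)
  zify [hA, h]; ring

theorem gcd_pow_add_one_pow_sub_one (q m j : ℕ) (hq : 2 ≤ q) (hm : 1 ≤ m) (hmodd : Odd m)
    (hj : 1 ≤ j) :
    Nat.gcd (q ^ m + 1) (q ^ (2 * j) - 1) = q ^ (Nat.gcd m j) + 1 := by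
  set d := Nat.gcd m j with hd
  have hq1 : 1 ≤ q := by omega
  have hd1 : 0 < d := Nat.gcd_pos_of_pos_left _ hm
  have hdm : d ∣ m := Nat.gcd_dvd_left m j
  have hdj : d ∣ j := Nat.gcd_dvd_right m j
  obtain ⟨k, hk⟩ := hdm
  have hkodd : Odd k := by
    rw [hk, Nat.odd_mul] at hmodd; exact hmodd.2
  have hk1 : 1 ≤ k := hkodd.pos
  -- basic positivity
  have hqd1 : 1 ≤ q ^ d := Nat.one_le_pow _ _ hq1
  have hqm1 : 1 ≤ q ^ m := Nat.one_le_pow _ _ hq1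
  -- Step A : q^d + 1 ∣ q^m + 1
  have hA : q ^ d + 1 ∣ q ^ m + 1 := by
    have := hkodd.nat_add_dvd_pow_add_pow (q ^ d) 1
    simpa [← pow_mul, ← hk] using this
  -- Step B : q^d + 1 ∣ q^(2j) - 1
  have hB : q ^ d + 1 ∣ q ^ (2 * j) - 1 := by
    have h1 : q ^ d + 1 ∣ q ^ (2 * d) - 1 := by
      have : q ^ (2 * d) - 1 = (q ^ d + 1) * (q ^ d - 1) := by
        rw [two_mul, pow_add, ← aux_mul_sub _ hqd1]
      exact this ▸ Dvd.intro _ rfl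
    obtain ⟨t, ht⟩ := hdj
    have h2 : q ^ (2 * d) - 1 ∣ q ^ (2 * j) - 1 := by
      have := Nat.sub_dvd_pow_sub_pow (q ^ (2 * d)) 1 t
      simpa [← pow_mul, one_pow, ht, mul_assoc] using this
    exact h1.trans h2
  set g := Nat.gcd (q ^ m + 1) (q ^ (2 * j) - 1) with hg
  have hAB : q ^ d + 1 ∣ g := Nat.dvd_gcd hA hB
  -- Step C : g ∣ q^(2d) - 1
  have hgm : g ∣ q ^ m + 1 := Nat.gcd_dvd_left _ _
  have hgj : g ∣ q ^ (2 * j) - 1 := Nat.gcd_dvd_right _ _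
  have hC : g ∣ q ^ (2 * d) - 1 := by
    have h1 : g ∣ q ^ (2 * m) - 1 := by
      have h2 : q ^ m + 1 ∣ q ^ (2 * m) - 1 := by
        have : q ^ (2 * m) - 1 = (q ^ m + 1) * (q ^ m - 1) := by
          rw [two_mul, pow_add, ← aux_mul_sub _ hqm1]
        exact this ▸ Dvd.intro _ rfl
      exact hgm.trans h2
    have := aux_dvd_pow_gcd_sub_one q (2 * m) (2 * j) g hq1 h1 hgj
    rwa [Nat.gcd_mul_left, ← hd] at this
  -- write g = (q^d+1) * s
  obtain ⟨s, hs⟩ := hAB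
  have hsd : s ∣ q ^ d - 1 := by
    have h1 : (q ^ d + 1) * s ∣ (q ^ d + 1) * (q ^ d - 1) := by
      rw [← hs]
      have : q ^ (2 * d) - 1 = (q ^ d + 1) * (q ^ d - 1) := by
        rw [two_mul, pow_add, ← aux_mul_sub _ hqd1]
      exact this ▸ hC
    exact (Nat.mul_dvd_mul_iff_left (by omega : 0 < q ^ d + 1)).mp h1
  have hsg : s ∣ g := by rw [hs]; exact dvd_mul_left _ _
  have hs2 : s ∣ 2 := by
    have h1 : s ∣ q ^ m + 1 := hsg.trans hgm
    have h2 : s ∣ q ^ m - 1 := by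
      have := Nat.sub_dvd_pow_sub_pow (q ^ d) 1 k
      rw [← pow_mul, ← hk, one_pow] at this
      exact hsd.trans this
    have := Nat.dvd_sub h1 h2
    simpa [show q ^ m + 1 - (q ^ m - 1) = 2 by omega] using this
  rcases (Nat.dvd_prime Nat.prime_two).mp hs2 with h1 | h2
  · rw [hs, h1, mul_one]
  · -- s = 2 : derive a contradiction
    exfalso
    subst h2
    have hdvd : 2 * (q ^ d + 1) ∣ q ^ m + 1 := by
      have : 2 * (q ^ d + 1) ∣ g := by rw [hs]; exact ⟨1, by ring⟩
      exact this.trans hgm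
    rcases Nat.even_or_odd q with hqe | hqo
    · have h2 : 2 ∣ q ^ m + 1 := (dvd_mul_right 2 _).trans hdvd
      have h3 : 2 ∣ q := hqe.two_dvd
      have h4 : 2 ∣ q ^ m := dvd_pow h3 (by omega)
      omega
    · -- q odd
      have hxodd : Odd ((q : ℤ) ^ d) := by
        exact_mod_cast hqo.pow
      obtain ⟨c, hc, hcodd⟩ := aux_cofactor_odd ((q : ℤ) ^ d) k hxodd hkodd
      rw [← pow_mul, ← hk] at hc
      have hdvdZ : (2 * ((q : ℤ) ^ d + 1)) ∣ ((q : ℤ) ^ m + 1) := by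
        exact_mod_cast Int.natCast_dvd_natCast.mpr hdvd
      rw [← hc] at hdvdZ
      obtain ⟨t, ht⟩ := hdvdZ
      have hne : ((q : ℤ) ^ d + 1) ≠ 0 := by positivity
      have : c = 2 * t := by
        apply mul_left_cancel₀ hne
        rw [ht]; ring
      exact hcodd ⟨t, this⟩
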